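/- Let k ≥ 2 be an integer and n ≥ 4k. Then the graph K^{k−2}_{2,n−k} is minimally (k,k)-edge-connected. -/

import Mathlib

open SimpleGraph

/-- The `l`-edge-connectivity of a graph: the minimum number of edges whose removal
leaves a graph with at least `l` connected components, if the graph has at least `l`
vertices; otherwise the number of vertices. -/
noncomputable def edgeConnL {V : Type*} (l : ℕ) (G : SimpleGraph V) : ℕ :=
  if l ≤ Nat.card V then
    sInf {c : ℕ | ∃ F : Set (Sym2 V), F ⊆ G.edgeSet ∧ F.ncard = c ∧
      l ≤ Nat.card (G.deleteEdges F).ConnectedComponent}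
  else Nat.card V

/-- A graph is minimally `(k,l)`-edge-connected if it is connected, its
`l`-edge-connectivity is at least `k`, and deleting any edge drops the
`l`-edge-connectivity below `k`. -/
def IsMinimallyKLEdgeConnected {V : Type*} (k l : ℕ) (G : SimpleGraph V) : Prop :=
  G.Connected ∧ k ≤ edgeConnL l G ∧
    ∀ e ∈ G.edgeSet, edgeConnL l (G.deleteEdges {e}) < k

/-- The real adjacency matrix of a simple graph. -/
noncomputable def adjMat {V : Type*} (G : SimpleGraph V) : Matrix V V ℝ :=
  letI := Classical.decRel G.Adj
  G.adjMatrix ℝ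

/-- The spectral radius of a graph: the largest (real) eigenvalue of its adjacency matrix. -/
noncomputable def specRad {V : Type*} [Fintype V] [DecidableEq V]
    (G : SimpleGraph V) : ℝ :=
  sSup (spectrum ℝ (adjMat G))

abbrev KbookV (p s : ℕ) : Type := (Unit ⊕ Unit) ⊕ (Fin s ⊕ Fin p)

/-- `K^{p}_{2,s}`: the graph obtained from the disjoint union of the star `K_{1,p}` and the
complete bipartite graph `K_{2,s}` by identifying the centre of the star with one of the two
vertices of degree `s` of `K_{2,s}`.  Here `Sum.inl (Sum.inl _)` is the identified vertex,
`Sum.inl (Sum.inr _)` is the other vertex of the part of size two, `Fin s` is the part of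
size `s` and `Fin p` are the pendant vertices. -/
def Kbook (p s : ℕ) : SimpleGraph (KbookV p s) :=
  SimpleGraph.fromRel (fun a b =>
    match a, b with
    | Sum.inl (Sum.inl _), Sum.inr _ => True
    | Sum.inl (Sum.inr _), Sum.inr (Sum.inl _) => True
    | _, _ => False)

namespace KbookAux

variable {p s : ℕ}

def u : KbookV p s := Sum.inl (Sum.inl ())
def v : KbookV p s := Sum.inl (Sum.inr ())
def w (j : Fin s) : KbookV p s := Sum.inr (Sum.inl j)
def q (i : Fin p) : KbookV p s := Sum.inr (Sum.inr i)

lemma adj_uq (i : Fin p) : (Kbook p s).Adj u (q i) := by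
  simp [Kbook, u, q, SimpleGraph.fromRel_adj]

lemma adj_uw (j : Fin s) : (Kbook p s).Adj u (w j) := by
  simp [Kbook, u, w, SimpleGraph.fromRel_adj]

lemma adj_vw (j : Fin s) : (Kbook p s).Adj v (w j) := by
  simp [Kbook, v, w, SimpleGraph.fromRel_adj]

lemma adj_cases {a b : KbookV p s} (h : (Kbook p s).Adj a b) :
    (∃ i, s(a, b) = s(u, q i)) ∨ (∃ j, s(a, b) = s(u, w j)) ∨ (∃ j, s(a, b) = s(v, w j)) := by
  rw [Kbook, SimpleGraph.fromRel_adj] at h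
  obtain ⟨-, h | h⟩ := h <;>
    rcases a with (⟨⟩ | ⟨⟩) | (j | i) <;> rcases b with (⟨⟩ | ⟨⟩) | (j' | i') <;>
      simp_all [u, v, w, q, Sym2.eq_swap]

end KbookAux

namespace KbookAux

variable {p s : ℕ}

abbrev X (p s : ℕ) : Type := Unit ⊕ (Fin p ⊕ (Fin s ⊕ Unit))

open Classical in
noncomputable def gv (F : Set (Sym2 (KbookV p s))) : X p s :=
  if ∃ j : Fin s, s(u, w j) ∉ F ∧ s(v, w j) ∉ F then Sum.inl () else Sum.inr (Sum.inr (Sum.inr ()))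

open Classical in
noncomputable def g (F : Set (Sym2 (KbookV p s))) : KbookV p s → X p s
  | Sum.inl (Sum.inl _) => Sum.inl ()
  | Sum.inl (Sum.inr _) => gv F
  | Sum.inr (Sum.inr i) => if s(u, q i) ∈ F then Sum.inr (Sum.inl i) else Sum.inl ()
  | Sum.inr (Sum.inl j) =>
      if s(u, w j) ∈ F then
        (if s(v, w j) ∈ F then Sum.inr (Sum.inr (Sum.inl j)) else gv F)
      else Sum.inl ()

lemma g_u (F : Set (Sym2 (KbookV p s))) : g F u = Sum.inl () := rfl
lemma g_v (F : Set (Sym2 (KbookV p s))) : g F v = gv F := rfl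

open Classical in
lemma g_q (F : Set (Sym2 (KbookV p s))) (i : Fin p) :
    g F (q i) = if s(u, q i) ∈ F then Sum.inr (Sum.inl i) else Sum.inl () := rfl

open Classical in
lemma g_w (F : Set (Sym2 (KbookV p s))) (j : Fin s) :
    g F (w j) = if s(u, w j) ∈ F then
        (if s(v, w j) ∈ F then Sum.inr (Sum.inr (Sum.inl j)) else gv F)
      else Sum.inl () := rfl

lemma gv_inl {F : Set (Sym2 (KbookV p s))} (hne : gv F ≠ Sum.inr (Sum.inr (Sum.inr ()))) :
    ∃ j : Fin s, s(u, w j) ∉ F ∧ s(v, w j) ∉ F := by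
  by_contra h
  exact hne (by rw [gv, if_neg h])

lemma gv_of_witness {F : Set (Sym2 (KbookV p s))} {j : Fin s}
    (h1 : s(u, w j) ∉ F) (h2 : s(v, w j) ∉ F) : gv F = Sum.inl () := by
  rw [gv, if_pos ⟨j, h1, h2⟩]

end KbookAux

namespace KbookAux

variable {p s : ℕ} {F : Set (Sym2 (KbookV p s))}

lemma g_adj {a b : KbookV p s} (h : ((Kbook p s).deleteEdges F).Adj a b) :
    g F a = g F b := by
  rw [SimpleGraph.deleteEdges_adj] at h
  obtain ⟨hadj, hF⟩ := h
  have key : ∀ x y : KbookV p s, s(x, y) ∉ F →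
      ((∃ i, s(x, y) = s(u, q i)) ∨ (∃ j, s(x, y) = s(u, w j)) ∨ (∃ j, s(x, y) = s(v, w j))) →
      True := fun _ _ _ _ => trivial
  rcases adj_cases hadj with ⟨i, hi⟩ | ⟨j, hj⟩ | ⟨j, hj⟩
  · -- s(a,b) = s(u, q i)
    rw [Sym2.eq_iff] at hi
    rcases hi with ⟨rfl, rfl⟩ | ⟨rfl, rfl⟩
    · rw [g_u, g_q, if_neg hF]
    · rw [g_u, g_q, if_neg (by rwa [Sym2.eq_swap] at hF)]
  · rw [Sym2.eq_iff] at hj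
    rcases hj with ⟨rfl, rfl⟩ | ⟨rfl, rfl⟩
    · rw [g_u, g_w, if_neg hF]
    · rw [g_u, g_w, if_neg (by rwa [Sym2.eq_swap] at hF)]
  · rw [Sym2.eq_iff] at hj
    have main : ∀ j : Fin s, s(v, w j) ∉ F → g F v = g F (w j) := by
      intro j hvw
      rw [g_v, g_w]
      by_cases huw : s(u, w j) ∈ F
      · rw [if_pos huw, if_neg hvw]
      · rw [if_neg huw, gv_of_witness huw hvw]
    rcases hj with ⟨rfl, rfl⟩ | ⟨rfl, rfl⟩
    · exact main _ hF
    · exact (main _ (by rwa [Sym2.eq_swap] at hF)).symm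

lemma g_reach {a b : KbookV p s} (h : ((Kbook p s).deleteEdges F).Reachable a b) :
    g F a = g F b := by
  obtain ⟨pth⟩ := h
  induction pth with
  | nil => rfl
  | cons h _ ih => exact (g_adj h).trans ih

lemma reach_of_uw {j : Fin s} (h : s(u, w j) ∉ F) :
    ((Kbook p s).deleteEdges F).Reachable u (w j) :=
  (SimpleGraph.deleteEdges_adj.2 ⟨adj_uw j, h⟩).reachable

lemma reach_of_vw {j : Fin s} (h : s(v, w j) ∉ F) :
    ((Kbook p s).deleteEdges F).Reachable v (w j) :=
  (SimpleGraph.deleteEdges_adj.2 ⟨adj_vw j, h⟩).reachable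

lemma reach_of_uq {i : Fin p} (h : s(u, q i) ∉ F) :
    ((Kbook p s).deleteEdges F).Reachable u (q i) :=
  (SimpleGraph.deleteEdges_adj.2 ⟨adj_uq i, h⟩).reachable

/-- vertices mapped to `inl ()` reach `u`. -/
lemma reach_u_of_inl {x : KbookV p s} (hx : g F x = Sum.inl ()) :
    ((Kbook p s).deleteEdges F).Reachable x u := by
  have hv : gv F = Sum.inl () → ((Kbook p s).deleteEdges F).Reachable v u := by
    intro hgv
    obtain ⟨j0, h1, h2⟩ := gv_inl (F := F) (by rw [hgv]; simp)
    exact (reach_of_vw h2).trans (reach_of_uw h1).symm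
  rcases x with (⟨⟩ | ⟨⟩) | (j | i)
  · rfl
  · exact hv hx
  · -- w j
    rw [show (Sum.inr (Sum.inl j) : KbookV p s) = w j from rfl, g_w] at hx
    by_cases huw : s(u, w j) ∈ F
    · rw [if_pos huw] at hx
      by_cases hvw : s(v, w j) ∈ F
      · rw [if_pos hvw] at hx; simp at hx
      · rw [if_neg hvw] at hx
        exact (reach_of_vw hvw).symm.trans (hv hx)
    · exact (reach_of_uw huw).symm
  · rw [show (Sum.inr (Sum.inr i) : KbookV p s) = q i from rfl, g_q] at hx
    by_cases huq : s(u, q i) ∈ F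
    · rw [if_pos huq] at hx; simp at hx
    · exact (reach_of_uq huq).symm

lemma reach_v_of_inr {x : KbookV p s} (hx : g F x = Sum.inr (Sum.inr (Sum.inr ()))) :
    ((Kbook p s).deleteEdges F).Reachable x v := by
  rcases x with (⟨⟩ | ⟨⟩) | (j | i)
  · exact absurd (hx.symm.trans (g_u F)) (by simp)
  · rfl
  · rw [show (Sum.inr (Sum.inl j) : KbookV p s) = w j from rfl, g_w] at hx
    by_cases huw : s(u, w j) ∈ F
    · rw [if_pos huw] at hx
      by_cases hvw : s(v, w j) ∈ F
      · rw [if_pos hvw] at hx; simp at hx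
      · exact (reach_of_vw hvw).symm
    · rw [if_neg huw] at hx; simp at hx
  · rw [show (Sum.inr (Sum.inr i) : KbookV p s) = q i from rfl, g_q] at hx
    by_cases huq : s(u, q i) ∈ F
    · rw [if_pos huq] at hx; simp at hx
    · rw [if_neg huq] at hx; simp at hx

lemma eq_q_of_g {x : KbookV p s} {i : Fin p} (hx : g F x = Sum.inr (Sum.inl i)) :
    x = q i := by
  rcases x with (⟨⟩ | ⟨⟩) | (j | i')
  · exact absurd (hx.symm.trans (g_u F)) (by simp)
  · replace hx : gv F = Sum.inr (Sum.inl i) := hx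
    rw [gv] at hx; split at hx <;> simp_all
  · rw [show (Sum.inr (Sum.inl j) : KbookV p s) = w j from rfl, g_w] at hx
    split at hx
    · split at hx
      · simp_all
      · rw [gv] at hx; split at hx <;> simp_all
    · simp_all
  · rw [show (Sum.inr (Sum.inr i') : KbookV p s) = q i' from rfl, g_q] at hx
    split at hx
    · simp at hx; rw [hx]; rfl
    · simp_all

lemma eq_w_of_g {x : KbookV p s} {j : Fin s} (hx : g F x = Sum.inr (Sum.inr (Sum.inl j))) :
    x = w j := by
  rcases x with (⟨⟩ | ⟨⟩) | (j' | i)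
  · exact absurd (hx.symm.trans (g_u F)) (by simp)
  · replace hx : gv F = Sum.inr (Sum.inr (Sum.inl j)) := hx
    rw [gv] at hx; split at hx <;> simp_all
  · rw [show (Sum.inr (Sum.inl j') : KbookV p s) = w j' from rfl, g_w] at hx
    split at hx
    · split at hx
      · simp at hx; rw [hx]; rfl
      · rw [gv] at hx; split at hx <;> simp_all
    · simp_all
  · rw [show (Sum.inr (Sum.inr i) : KbookV p s) = q i from rfl, g_q] at hx
    split at hx <;> simp_all

lemma reach_of_g_eq {a b : KbookV p s} (h : g F a = g F b) :
    ((Kbook p s).deleteEdges F).Reachable a b := by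
  rcases hval : g F a with ⟨⟩ | i | j | ⟨⟩
  · exact (reach_u_of_inl hval).trans (reach_u_of_inl (h.symm.trans hval)).symm
  · rw [eq_q_of_g hval, eq_q_of_g (h.symm.trans hval)]
  · rw [eq_w_of_g hval, eq_w_of_g (h.symm.trans hval)]
  · exact (reach_v_of_inr hval).trans (reach_v_of_inr (h.symm.trans hval)).symm

end KbookAux

namespace KbookAux

variable {p s : ℕ}

noncomputable def gbar (F : Set (Sym2 (KbookV p s))) :
    ((Kbook p s).deleteEdges F).ConnectedComponent → X p s :=
  SimpleGraph.ConnectedComponent.lift (g F) (fun _ _ pth _ => g_reach ⟨pth⟩)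

lemma gbar_mk (F : Set (Sym2 (KbookV p s))) (x : KbookV p s) :
    gbar F (((Kbook p s).deleteEdges F).connectedComponentMk x) = g F x := rfl

lemma gbar_injective (F : Set (Sym2 (KbookV p s))) : Function.Injective (gbar F) := by
  intro c d
  refine SimpleGraph.ConnectedComponent.ind₂
    (β := fun c d => gbar F c = gbar F d → c = d) (fun a b h => ?_) c d
  exact SimpleGraph.ConnectedComponent.sound (reach_of_g_eq h)

lemma range_gbar (F : Set (Sym2 (KbookV p s))) :
    Set.range (gbar F) = Set.range (g F) := by
  ext x
  constructor
  · rintro ⟨c, rfl⟩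
    exact c.ind (fun a => ⟨a, rfl⟩)
  · rintro ⟨a, rfl⟩
    exact ⟨((Kbook p s).deleteEdges F).connectedComponentMk a, rfl⟩

lemma card_comps (F : Set (Sym2 (KbookV p s))) :
    Nat.card ((Kbook p s).deleteEdges F).ConnectedComponent = (Set.range (g F)).ncard := by
  rw [← Nat.card_range_of_injective (gbar_injective F), range_gbar,
    Nat.card_coe_set_eq]

end KbookAux

namespace KbookAux

variable {p s : ℕ}

lemma ne_uv : (u : KbookV p s) ≠ v := by simp [u, v]
lemma ne_uw (j : Fin s) : (u : KbookV p s) ≠ w j := by simp [u, w]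
lemma ne_vw (j : Fin s) : (v : KbookV p s) ≠ w j := by simp [v, w]
lemma ne_uq (i : Fin p) : (u : KbookV p s) ≠ q i := by simp [u, q]
lemma w_inj : Function.Injective (w : Fin s → KbookV p s) := by
  intro a b h; simpa [w] using h
lemma q_inj : Function.Injective (q : Fin p → KbookV p s) := by
  intro a b h; simpa [q] using h

lemma lower_bound {k : ℕ} (hp : p + 2 = k) (hs : k ≤ s)
    (F : Set (Sym2 (KbookV p s)))
    (hcomp : k ≤ Nat.card ((Kbook p s).deleteEdges F).ConnectedComponent) :
    k ≤ F.ncard := by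
  classical
  rw [card_comps] at hcomp
  by_cases hw : ∃ j : Fin s, s((u : KbookV p s), w j) ∉ F ∧ s((v : KbookV p s), w j) ∉ F
  · set A := {i : Fin p | s((u : KbookV p s), q i) ∈ F} with hA
    set T := {j : Fin s | s((u : KbookV p s), w j) ∈ F ∧ s((v : KbookV p s), w j) ∈ F} with hT
    obtain ⟨j0, h1, h2⟩ := hw
    have hrange : Set.range (g F) ⊆ insert (Sum.inl ())
        ((fun i => (Sum.inr (Sum.inl i) : X p s)) '' A ∪
          (fun j => (Sum.inr (Sum.inr (Sum.inl j)) : X p s)) '' T) := by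
      rintro x ⟨y, rfl⟩
      rcases y with (⟨⟩ | ⟨⟩) | (j | i)
      · exact Set.mem_insert _ _
      · exact Set.mem_insert_iff.2 (Or.inl (show gv F = _ from gv_of_witness h1 h2))
      · rw [show (Sum.inr (Sum.inl j) : KbookV p s) = w j from rfl, g_w]
        by_cases huw : s((u : KbookV p s), w j) ∈ F
        · rw [if_pos huw]
          by_cases hvw : s((v : KbookV p s), w j) ∈ F
          · rw [if_pos hvw]
            exact Set.mem_insert_iff.2 (Or.inr (Set.mem_union_right _ ⟨j, ⟨huw, hvw⟩, rfl⟩))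
          · rw [if_neg hvw, gv_of_witness h1 h2]
            exact Set.mem_insert _ _
        · rw [if_neg huw]; exact Set.mem_insert _ _
      · rw [show (Sum.inr (Sum.inr i) : KbookV p s) = q i from rfl, g_q]
        by_cases huq : s((u : KbookV p s), q i) ∈ F
        · rw [if_pos huq]
          exact Set.mem_insert_iff.2 (Or.inr (Set.mem_union_left _ ⟨i, huq, rfl⟩))
        · rw [if_neg huq]; exact Set.mem_insert _ _
    have hcount : k ≤ 1 + (A.ncard + T.ncard) := by
      calc k ≤ (Set.range (g F)).ncard := hcomp
        _ ≤ _ := Set.ncard_le_ncard hrange (Set.toFinite _)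
        _ ≤ _ + 1 := Set.ncard_insert_le _ _
        _ ≤ (A.ncard + T.ncard) + 1 := by
            refine Nat.add_le_add_right ?_ 1
            refine le_trans (Set.ncard_union_le _ _) ?_
            refine Nat.add_le_add ?_ ?_ <;> exact Set.ncard_image_le (Set.toFinite _)
        _ = 1 + (A.ncard + T.ncard) := by omega
    have haP : A.ncard ≤ p := by
      refine le_trans (Set.ncard_le_ncard (Set.subset_univ A) (Set.toFinite _)) ?_
      simp [Set.ncard_univ]
    have hT1 : 1 ≤ T.ncard := by omega
    -- lower bound on F.ncard
    have hFsub : ((fun i => s((u : KbookV p s), q i)) '' A ∪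
        ((fun j => s((u : KbookV p s), w j)) '' T ∪
          (fun j => s((v : KbookV p s), w j)) '' T)) ⊆ F := by
      rintro x (⟨i, hi, rfl⟩ | ⟨j, hj, rfl⟩ | ⟨j, hj, rfl⟩)
      · exact hi
      · exact hj.1
      · exact hj.2
    have hd1 : Disjoint ((fun j => s((u : KbookV p s), w j)) '' T)
        ((fun j => s((v : KbookV p s), w j)) '' T) := by
      rw [Set.disjoint_left]
      rintro x ⟨j, -, rfl⟩ ⟨j', -, h⟩
      simp [Sym2.eq_iff, u, v, w] at h
    have hd2 : Disjoint ((fun i => s((u : KbookV p s), q i)) '' A)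
        ((fun j => s((u : KbookV p s), w j)) '' T ∪
          (fun j => s((v : KbookV p s), w j)) '' T) := by
      rw [Set.disjoint_left]
      rintro x ⟨i, -, rfl⟩ (⟨j, -, h⟩ | ⟨j, -, h⟩) <;>
        simp [Sym2.eq_iff, u, v, w, q] at h
    have hcard : ((fun i => s((u : KbookV p s), q i)) '' A ∪
        ((fun j => s((u : KbookV p s), w j)) '' T ∪
          (fun j => s((v : KbookV p s), w j)) '' T)).ncard
        = A.ncard + (T.ncard + T.ncard) := by
      rw [Set.ncard_union_eq hd2 (Set.toFinite _) (Set.toFinite _),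
        Set.ncard_union_eq hd1 (Set.toFinite _) (Set.toFinite _)]
      congr 1
      · exact Set.ncard_image_of_injective _
          (fun a b h => q_inj (Sym2.congr_right.mp h))
      congr 1 <;> exact Set.ncard_image_of_injective _
          (fun a b h => w_inj (Sym2.congr_right.mp h))
    have : A.ncard + (T.ncard + T.ncard) ≤ F.ncard := by
      rw [← hcard]
      exact Set.ncard_le_ncard hFsub (Set.toFinite _)
    omega
  · push_neg at hw
    have hw' : ∀ j : Fin s, s((u : KbookV p s), w j) ∈ F ∨ s((v : KbookV p s), w j) ∈ F := by
      intro j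
      by_cases h : s((u : KbookV p s), w j) ∈ F
      · exact Or.inl h
      · exact Or.inr (hw j h)
    set f : Fin s → Sym2 (KbookV p s) :=
      fun j => if s((u : KbookV p s), w j) ∈ F then s((u : KbookV p s), w j)
        else s((v : KbookV p s), w j) with hf
    have hinj : Function.Injective f := by
      intro a b h
      rw [hf] at h
      dsimp only at h
      split_ifs at h <;> simp_all [Sym2.eq_iff, u, v, w]
    have hsubF : Set.range f ⊆ F := by
      rintro x ⟨j, rfl⟩
      rw [hf]
      dsimp only
      split_ifs with h
      · exact h
      · exact hw j h
    have : s ≤ F.ncard := by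
      calc s = (Set.range f).ncard := by
              rw [← Set.image_univ, Set.ncard_image_of_injective _ hinj, Set.ncard_univ]
              simp
        _ ≤ F.ncard := Set.ncard_le_ncard hsubF (Set.toFinite _)
    omega

end KbookAux

namespace KbookAux

variable {p s : ℕ}

def totalF (j0 : Fin s) : Set (Sym2 (KbookV p s)) :=
  (Set.range fun i : Fin p => s((u : KbookV p s), q i)) ∪
    {s((u : KbookV p s), w j0), s((v : KbookV p s), w j0)}

lemma mem_tf_uw (j0 : Fin s) : s((u : KbookV p s), w j0) ∈ totalF j0 :=
  Set.mem_union_right _ (Set.mem_insert _ _)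

lemma mem_tf_vw (j0 : Fin s) : s((v : KbookV p s), w j0) ∈ totalF j0 :=
  Set.mem_union_right _ (Set.mem_insert_iff.2 (Or.inr rfl))

lemma mem_tf_uq (j0 : Fin s) (i : Fin p) : s((u : KbookV p s), q i) ∈ totalF j0 :=
  Set.mem_union_left _ ⟨i, rfl⟩

lemma tf_sub (j0 : Fin s) : totalF j0 ⊆ (Kbook p s).edgeSet := by
  rintro x (⟨i, rfl⟩ | (rfl | rfl))
  · exact (adj_uq i)
  · exact (adj_uw j0)
  · exact (adj_vw j0)

lemma tf_ncard (j0 : Fin s) : (totalF (p := p) j0).ncard = p + 2 := by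
  rw [totalF, Set.ncard_union_eq ?hd (Set.toFinite _) (Set.toFinite _)]
  · congr 1
    · rw [← Set.image_univ,
        Set.ncard_image_of_injective _ (fun a b h => q_inj (Sym2.congr_right.mp h)),
        Set.ncard_univ]
      simp
    · rw [Set.ncard_pair]
      intro h
      simp [Sym2.eq_iff, u, v, w] at h
  case hd =>
    rw [Set.disjoint_left]
    rintro x ⟨i, rfl⟩ (h | h) <;> simp [Sym2.eq_iff, u, v, w, q] at h

lemma comps_tf {k : ℕ} (hp : p + 2 = k) (j0 : Fin s) :
    k ≤ Nat.card ((Kbook p s).deleteEdges (totalF j0)).ConnectedComponent := by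
  rw [card_comps]
  have hsub : insert (Sum.inl ()) (insert (Sum.inr (Sum.inr (Sum.inl j0)))
      ((fun i => (Sum.inr (Sum.inl i) : X p s)) '' Set.univ)) ⊆ Set.range (g (totalF j0)) := by
    rintro x (rfl | rfl | ⟨i, -, rfl⟩)
    · exact ⟨u, g_u _⟩
    · exact ⟨w j0, by rw [g_w, if_pos (mem_tf_uw j0), if_pos (mem_tf_vw j0)]⟩
    · exact ⟨q i, by rw [g_q, if_pos (mem_tf_uq j0 i)]⟩
  have hcard : (insert (Sum.inl ()) (insert (Sum.inr (Sum.inr (Sum.inl j0)))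
      ((fun i => (Sum.inr (Sum.inl i) : X p s)) '' Set.univ))).ncard = p + 2 := by
    rw [Set.ncard_insert_of_notMem (by simp), Set.ncard_insert_of_notMem (by simp),
      Set.ncard_image_of_injective _ (fun a b h => by simpa using h), Set.ncard_univ]
    simp
  calc k = p + 2 := hp.symm
    _ = _ := hcard.symm
    _ ≤ _ := Set.ncard_le_ncard hsub (Set.toFinite _)

lemma exists_cut {k : ℕ} (hp : p + 2 = k) (hs0 : 0 < s) {e : Sym2 (KbookV p s)}
    (he : e ∈ (Kbook p s).edgeSet) :
    ∃ F : Set (Sym2 (KbookV p s)), F ⊆ ((Kbook p s).deleteEdges {e}).edgeSet ∧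
      F.ncard = k - 1 ∧
      k ≤ Nat.card (((Kbook p s).deleteEdges {e}).deleteEdges F).ConnectedComponent := by
  have hform : ∃ j0 : Fin s, e ∈ totalF j0 := by
    induction e using Sym2.ind with
    | _ a b =>
      rw [SimpleGraph.mem_edgeSet] at he
      rcases adj_cases he with ⟨i, hi⟩ | ⟨j, hj⟩ | ⟨j, hj⟩
      · exact ⟨⟨0, hs0⟩, hi ▸ mem_tf_uq _ i⟩
      · exact ⟨j, hj ▸ mem_tf_uw j⟩
      · exact ⟨j, hj ▸ mem_tf_vw j⟩
  obtain ⟨j0, hj0⟩ := hform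
  refine ⟨totalF j0 \ {e}, ?_, ?_, ?_⟩
  · rw [SimpleGraph.edgeSet_deleteEdges]
    exact Set.diff_subset_diff_left (tf_sub j0)
  · rw [Set.ncard_diff_singleton_of_mem hj0, tf_ncard]
    omega
  · rw [SimpleGraph.deleteEdges_deleteEdges,
      Set.union_diff_cancel (Set.singleton_subset_iff.2 hj0)]
    exact comps_tf hp j0

lemma comps_bot : s ≤ Nat.card ((Kbook p s).deleteEdges (Kbook p s).edgeSet).ConnectedComponent := by
  rw [card_comps]
  have hsub : ((fun j => (Sum.inr (Sum.inr (Sum.inl j)) : X p s)) '' Set.univ) ⊆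
      Set.range (g (Kbook p s).edgeSet) := by
    rintro x ⟨j, -, rfl⟩
    exact ⟨w j, by rw [g_w, if_pos ((Kbook p s).mem_edgeSet.mpr (adj_uw j)),
      if_pos ((Kbook p s).mem_edgeSet.mpr (adj_vw j))]⟩
  calc s = ((fun j => (Sum.inr (Sum.inr (Sum.inl j)) : X p s)) '' Set.univ).ncard := by
          rw [Set.ncard_image_of_injective _ (fun a b h => by simpa using h), Set.ncard_univ]
          simp
    _ ≤ _ := Set.ncard_le_ncard hsub (Set.toFinite _)

lemma kbook_connected (hs0 : 0 < s) : (Kbook p s).Connected := by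
  rw [connected_iff]
  have hreach : ∀ x : KbookV p s, (Kbook p s).Reachable x u := by
    intro x
    rcases x with (⟨⟩ | ⟨⟩) | (j | i)
    · rfl
    · exact (adj_vw (p := p) ⟨0, hs0⟩).reachable.trans (adj_uw ⟨0, hs0⟩).reachable.symm
    · exact (adj_uw j).reachable.symm
    · exact (adj_uq i).reachable.symm
  exact ⟨fun x y => (hreach x).trans (hreach y).symm, ⟨u⟩⟩

end KbookAux


open KbookAux in
theorem Kbook_isMinimallyKKEdgeConnected (k n : ℕ) (hk : 2 ≤ k) (hn : 4 * k ≤ n) :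
    IsMinimallyKLEdgeConnected k k (Kbook (k - 2) (n - k)) := by
  set p := k - 2 with hpdef
  set s := n - k with hsdef
  have hp : p + 2 = k := by omega
  have hs : k ≤ s := by omega
  have hs0 : 0 < s := by omega
  have hkn : k ≤ Nat.card (KbookV p s) := by
    have : Nat.card (KbookV p s) = 2 + (s + p) := by
      simp [Nat.card_eq_fintype_card]
    omega
  refine ⟨kbook_connected hs0, ?_, ?_⟩
  · rw [edgeConnL, if_pos hkn]
    refine le_csInf ⟨(Kbook p s).edgeSet.ncard, (Kbook p s).edgeSet, subset_rfl, rfl,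
      le_trans hs comps_bot⟩ ?_
    rintro c ⟨F, -, rfl, hcomp⟩
    exact lower_bound hp hs F hcomp
  · intro e he
    rw [edgeConnL, if_pos hkn]
    obtain ⟨F, h1, h2, h3⟩ := exists_cut hp hs0 he
    have hmem : k - 1 ∈ {c : ℕ | ∃ F : Set (Sym2 (KbookV p s)),
        F ⊆ ((Kbook p s).deleteEdges {e}).edgeSet ∧ F.ncard = c ∧
        k ≤ Nat.card (((Kbook p s).deleteEdges {e}).deleteEdges F).ConnectedComponent} :=
      ⟨F, h1, h2, h3⟩
    exact lt_of_le_of_lt (Nat.sInf_le hmem) (by omega)
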